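/- arXiv:1809.08900 — 2 statements merged into one kernel-verified Lean document; each statement's English description precedes it below -/
import Mathlib

section
/- Let G and H be graphs where every component of G has at least three vertices and H ∈ 𝒢, and let S be an edge metric basis for the lexicographic product G[H]. If g ∈ V(G) has a satellite g' ∈ V(G), then the layer {g} × V(H) or the layer {g'} × V(H) is entirely contained in S. -/
open SimpleGraph

variable {V W : Type*}

/-- Distance (in `ℕ∞`) from a vertex to an edge: the minimum of the distances
to the two endpoints. -/
noncomputable def edgeDist (G : SimpleGraph V) (v : V) (e : Sym2 V) : ℕ∞ :=
  Sym2.lift ⟨fun a b => min (G.edist v a) (G.edist v b),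
    fun a b => min_comm _ _⟩ e

/-- A set of vertices is an edge metric generator if every pair of distinct
edges is distinguished by some vertex of the set. -/
def IsEdgeMetricGenerator (G : SimpleGraph V) (S : Set V) : Prop :=
  ∀ e₁ ∈ G.edgeSet, ∀ e₂ ∈ G.edgeSet, e₁ ≠ e₂ →
    ∃ w ∈ S, edgeDist G w e₁ ≠ edgeDist G w e₂

/-- The edge metric dimension: minimum cardinality of an edge metric generator. -/
noncomputable def edim (G : SimpleGraph V) : ℕ :=
  sInf {n | ∃ S : Set V, S.ncard = n ∧ IsEdgeMetricGenerator G S}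


/-- The join of two graphs: disjoint union plus all edges across. -/
def joinGraph (G : SimpleGraph V) (H : SimpleGraph W) : SimpleGraph (V ⊕ W) where
  Adj x y := match x, y with
    | .inl a, .inl b => G.Adj a b
    | .inr a, .inr b => H.Adj a b
    | .inl _, .inr _ => True
    | .inr _, .inl _ => True
  symm := ⟨by rintro (a | a) (b | b) h <;> simp_all [SimpleGraph.adj_comm]⟩
  loopless := ⟨by
    rintro (a | a) h
    · exact G.irrefl h
    · exact H.irrefl h⟩

/-- A total dominating set: every vertex has a neighbor in the set. -/
def IsTotalDomSet (G : SimpleGraph V) (D : Set V) : Prop :=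
  ∀ v : V, ∃ d ∈ D, G.Adj v d

/-- The total domination number. -/
noncomputable def totalDomNum (G : SimpleGraph V) : ℕ :=
  sInf {n | ∃ D : Set V, D.ncard = n ∧ IsTotalDomSet G D}

/-- The class 𝒢: for every vertex `u` there is a neighbor `v`
such that `{u, v}` is a minimum total dominating set. -/
def InClassG (G : SimpleGraph V) : Prop :=
  ∀ u : V, ∃ v : V, G.Adj u v ∧ IsTotalDomSet G {u, v} ∧
    ({u, v} : Set V).ncard = totalDomNum G

/-- Lexicographic product `G[H]`. -/
def lexProd (G : SimpleGraph V) (H : SimpleGraph W) : SimpleGraph (V × W) where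
  Adj x y := G.Adj x.1 y.1 ∨ (x.1 = y.1 ∧ H.Adj x.2 y.2)
  symm := by refine ⟨?_⟩; rintro ⟨g, h⟩ ⟨g', h'⟩ (hadj | ⟨rfl, hadj⟩)
             · exact Or.inl hadj.symm
             · exact Or.inr ⟨rfl, hadj.symm⟩
  loopless := by refine ⟨?_⟩; rintro ⟨g, h⟩ (hadj | ⟨-, hadj⟩)
                 · exact G.irrefl hadj
                 · exact H.irrefl hadj

/-- Corona product `G ⊙ H`: vertex `(g, none)` is the vertex `g` of `G`, and
`(g, some h)` is the vertex `h` of the copy of `H` attached to `g`. -/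
def corona (G : SimpleGraph V) (H : SimpleGraph W) : SimpleGraph (V × Option W) where
  Adj x y := match x, y with
    | (g, none), (g', none) => G.Adj g g'
    | (g, none), (g', some _) => g = g'
    | (g, some _), (g', none) => g = g'
    | (g, some h), (g', some h') => g = g' ∧ H.Adj h h'
  symm := ⟨by rintro ⟨g, (_ | h)⟩ ⟨g', (_ | h')⟩ hadj <;>
             simp_all [SimpleGraph.adj_comm, eq_comm]⟩
  loopless := ⟨by rintro ⟨g, (_ | h)⟩ hadj <;> simp_all⟩

/-- The closed neighborhood of a vertex. -/
def closedNbhd (G : SimpleGraph V) (u : V) : Set V :=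
  insert u (G.neighborSet u)

/-- `u` and `v` are false twins: equal open neighborhoods. -/
def FalseTwin (G : SimpleGraph V) (u v : V) : Prop :=
  G.neighborSet u = G.neighborSet v

/-- `u` and `v` are true twins: equal closed neighborhoods. -/
def TrueTwin (G : SimpleGraph V) (u v : V) : Prop :=
  closedNbhd G u = closedNbhd G v

/-- The union of the closed neighborhoods of the two endpoints of an edge. -/
def edgeNbhd (G : SimpleGraph V) : Sym2 V → Set V :=
  Sym2.lift ⟨fun a b => closedNbhd G a ∪ closedNbhd G b, fun _ _ => Set.union_comm _ _⟩

/-- Two edges are twin edges: `N[u] ∪ N[v] = N[x] ∪ N[y]`. -/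
def TwinEdges (G : SimpleGraph V) (e f : Sym2 V) : Prop :=
  edgeNbhd G e = edgeNbhd G f

/-- The set of edges lying in nontrivial edge-twin classes. -/
def nontrivTwinEdges (G : SimpleGraph V) : Set (Sym2 V) :=
  {e ∈ G.edgeSet | ∃ f ∈ G.edgeSet, f ≠ e ∧ TwinEdges G e f}

/-- `q(G)`: the number of edges lying in nontrivial edge-twin classes. -/
noncomputable def qval (G : SimpleGraph V) : ℕ := (nontrivTwinEdges G).ncard

/-- `q'(G) = q(G) - m`, where `m` is the number of nontrivial edge-twin classes. -/
noncomputable def q'val (G : SimpleGraph V) : ℕ :=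
  qval G - (edgeNbhd G '' nontrivTwinEdges G).ncard

/-- The set of vertices lying in nontrivial false-twin classes. -/
def nontrivFalseTwins (G : SimpleGraph V) : Set V :=
  {v | ∃ u, u ≠ v ∧ FalseTwin G u v}

/-- The set of vertices lying in nontrivial true-twin classes. -/
def nontrivTrueTwins (G : SimpleGraph V) : Set V :=
  {v | ∃ u, u ≠ v ∧ TrueTwin G u v}

/-- `f'(G) = f(G) - k`: vertices in nontrivial false-twin classes minus the
number of such classes. -/
noncomputable def f'val (G : SimpleGraph V) : ℕ :=
  (nontrivFalseTwins G).ncard - (G.neighborSet '' nontrivFalseTwins G).ncard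

/-- `t'(G) = t(G) - ℓ`: vertices in nontrivial true-twin classes minus the
number of such classes. -/
noncomputable def t'val (G : SimpleGraph V) : ℕ :=
  (nontrivTrueTwins G).ncard - (closedNbhd G '' nontrivTrueTwins G).ncard

/-- A set of representatives for the twin deletion operation: it contains
exactly one vertex from each (false- or true-) twin equivalence class. -/
def IsTwinDeletionSet (G : SimpleGraph V) (R : Set V) : Prop :=
  ∀ v : V, ∃! r : V, r ∈ R ∧ (FalseTwin G v r ∨ TrueTwin G v r)



section AuxLemmas

variable {V W : Type*} (G : SimpleGraph V) (H : SimpleGraph W)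

private lemma lex_fst_edist_le {u v : V × W} (p : (lexProd G H).Walk u v) :
    G.edist u.1 v.1 ≤ p.length := by
  induction p with
  | nil => simp
  | @cons a b c hadj q ih =>
    rw [SimpleGraph.Walk.length_cons]
    rcases hadj with hg | ⟨heq, -⟩
    · calc G.edist a.1 c.1 ≤ G.edist a.1 b.1 + G.edist b.1 c.1 := SimpleGraph.edist_triangle
        _ ≤ 1 + (q.length : ℕ∞) :=
          add_le_add (le_of_eq (SimpleGraph.edist_eq_one_iff_adj.mpr hg)) ih
        _ = ((q.length + 1 : ℕ) : ℕ∞) := by push_cast; ring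
    · rw [heq]
      calc G.edist b.1 c.1 ≤ (q.length : ℕ∞) := ih
        _ ≤ ((q.length + 1 : ℕ) : ℕ∞) := by
          exact_mod_cast Nat.cast_le.mpr (Nat.le_succ _)

private lemma lex_edist_le_of_walk {c a : V} (p : G.Walk c a) (x : W) :
    ∀ z, c ≠ a → (lexProd G H).edist (c, z) (a, x) ≤ p.length := by
  induction p with
  | nil => exact fun z h => absurd rfl h
  | @cons u d v hadj q ih =>
    intro z _
    rw [SimpleGraph.Walk.length_cons]
    rcases eq_or_ne d v with rfl | hda
    · have h1 : (lexProd G H).Adj (u, z) (d, x) := Or.inl hadj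
      calc (lexProd G H).edist (u, z) (d, x) ≤ 1 :=
            le_of_eq (SimpleGraph.edist_eq_one_iff_adj.mpr h1)
        _ ≤ ((q.length + 1 : ℕ) : ℕ∞) := by
          exact_mod_cast Nat.one_le_iff_ne_zero.mpr (Nat.succ_ne_zero _)
    · have h1 : (lexProd G H).Adj (u, z) (d, x) := Or.inl hadj
      calc (lexProd G H).edist (u, z) (v, x)
          ≤ (lexProd G H).edist (u, z) (d, x) + (lexProd G H).edist (d, x) (v, x) :=
            SimpleGraph.edist_triangle
        _ ≤ 1 + (q.length : ℕ∞) :=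
            add_le_add (le_of_eq (SimpleGraph.edist_eq_one_iff_adj.mpr h1)) (ih x hda)
        _ = ((q.length + 1 : ℕ) : ℕ∞) := by push_cast; ring

private lemma lex_edist_eq {c a : V} (hne : c ≠ a) (z x : W) :
    (lexProd G H).edist (c, z) (a, x) = G.edist c a := by
  refine le_antisymm ?_ ?_
  · exact le_iInf fun p => lex_edist_le_of_walk G H p x z hne
  · exact le_iInf fun p => lex_fst_edist_le G H p

private lemma edist_le_of_closedNbhd_subset {g g' c : V}
    (hsub : closedNbhd G g' ⊆ closedNbhd G g) (hc : c ≠ g') :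
    G.edist c g ≤ G.edist c g' := by
  rcases eq_or_ne (G.edist c g') ⊤ with ht | ht
  · exact ht ▸ le_top
  obtain ⟨p, hp⟩ := SimpleGraph.exists_walk_of_edist_ne_top ht
  have key : ∀ {c' : V} (q : G.Walk g' c'), c' ≠ g' → G.edist g c' ≤ q.length := by
    intro c' q hq
    cases q with
    | nil => exact absurd rfl hq
    | @cons _ d _ hadj q' =>
      rw [SimpleGraph.Walk.length_cons]
      have hd : d ∈ closedNbhd G g := hsub (Set.mem_insert_of_mem _ hadj)
      rcases hd with rfl | hgd
      · calc G.edist d c' ≤ (q'.length : ℕ∞) := SimpleGraph.edist_le q'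
          _ ≤ ((q'.length + 1 : ℕ) : ℕ∞) := by
            exact_mod_cast Nat.cast_le.mpr (Nat.le_succ _)
      · calc G.edist g c' ≤ G.edist g d + G.edist d c' := SimpleGraph.edist_triangle
          _ ≤ 1 + (q'.length : ℕ∞) :=
            add_le_add (le_of_eq (SimpleGraph.edist_eq_one_iff_adj.mpr hgd)) (SimpleGraph.edist_le q')
          _ = ((q'.length + 1 : ℕ) : ℕ∞) := by push_cast; ring
  calc G.edist c g = G.edist g c := SimpleGraph.edist_comm
    _ ≤ (p.reverse.length : ℕ∞) := key p.reverse hc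
    _ = (p.length : ℕ∞) := by rw [SimpleGraph.Walk.length_reverse]
    _ = G.edist c g' := hp

private lemma edgeDist_mk (G : SimpleGraph V) (v a b : V) :
    edgeDist G v s(a, b) = min (G.edist v a) (G.edist v b) := rfl

end AuxLemmas

theorem lexProd_basis_satellite {V W : Type*} [Fintype V] [Fintype W]
    (G : SimpleGraph V) (H : SimpleGraph W)
    (hG : ∀ v : V, 3 ≤ (G.connectedComponentMk v).supp.ncard)
    (hH : InClassG H) (S : Set (V × W))
    (hSgen : IsEdgeMetricGenerator (lexProd G H) S)
    (hSmin : S.ncard = edim (lexProd G H))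
    (g g' : V) (hsat : closedNbhd G g' ⊂ closedNbhd G g) :
    {p : V × W | p.1 = g} ⊆ S ∨ {p : V × W | p.1 = g'} ⊆ S := by
  by_contra hcon
  push_neg at hcon
  obtain ⟨hc1, hc2⟩ := hcon
  rw [Set.not_subset] at hc1 hc2
  obtain ⟨⟨a1, h⟩, ha1, hhS⟩ := hc1
  obtain ⟨⟨a2, h'⟩, ha2, hh'S⟩ := hc2
  simp only [Set.mem_setOf_eq] at ha1 ha2
  replace ha1 := ha1.symm; replace ha2 := ha2.symm
  subst ha1; subst ha2
  have hgg' : g' ≠ g := by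
    intro he; exact hsat.ne (by rw [he])
  have gadj : G.Adj g g' := by
    have hmem : g' ∈ closedNbhd G g := hsat.subset (Set.mem_insert _ _)
    rcases Set.mem_insert_iff.mp hmem with h1 | h1
    · exact absurd h1 hgg'
    · exact h1
  obtain ⟨h₀, hadj, htd, -⟩ := hH h
  have he₁ : s(((g : V), (h : W)), ((g : V), (h₀ : W))) ∈ (lexProd G H).edgeSet :=
    (SimpleGraph.mem_edgeSet _).mpr (Or.inr ⟨rfl, hadj⟩)
  have he₂ : s(((g : V), (h₀ : W)), ((g' : V), (h' : W))) ∈ (lexProd G H).edgeSet :=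
    (SimpleGraph.mem_edgeSet _).mpr (Or.inl gadj)
  have hne12 : s(((g : V), (h : W)), ((g : V), (h₀ : W)))
      ≠ s(((g : V), (h₀ : W)), ((g' : V), (h' : W))) := by
    intro he
    have hm : ((g : V), (h : W)) ∈ s(((g : V), (h₀ : W)), ((g' : V), (h' : W))) :=
      he ▸ Sym2.mem_mk_left _ _
    rcases Sym2.mem_iff.mp hm with h1 | h1
    · exact hadj.ne (congrArg Prod.snd h1)
    · exact hgg' (congrArg Prod.fst h1).symm
  obtain ⟨⟨c, z⟩, hwS, hwne⟩ := hSgen _ he₁ _ he₂ hne12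
  apply hwne
  rw [edgeDist_mk, edgeDist_mk]
  rcases eq_or_ne g c with rfl | hcg
  · have hz : z ≠ h := fun hzz => hhS (by rw [hzz] at hwS; exact hwS)
    have d2 : (lexProd G H).edist (g, z) (g', h') = 1 :=
      SimpleGraph.edist_eq_one_iff_adj.mpr (Or.inl gadj)
    rcases eq_or_ne z h₀ with rfl | hz0
    · simp [d2]
    · have hD0 : 1 ≤ (lexProd G H).edist (g, z) (g, h₀) :=
        Order.one_le_iff_pos.mpr (SimpleGraph.edist_pos_of_ne (by simp [hz0]))
      have hDh : 1 ≤ (lexProd G H).edist (g, z) (g, h) :=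
        Order.one_le_iff_pos.mpr (SimpleGraph.edist_pos_of_ne (by simp [hz]))
      have hmin : min ((lexProd G H).edist (g, z) (g, h))
          ((lexProd G H).edist (g, z) (g, h₀)) = 1 := by
        obtain ⟨d, hd, hzd⟩ := htd z
        have hd' : d = h ∨ d = h₀ := by simpa using hd
        rcases hd' with rfl | rfl
        · have h1 : (lexProd G H).edist (g, z) (g, d) = 1 :=
            SimpleGraph.edist_eq_one_iff_adj.mpr (Or.inr ⟨rfl, hzd⟩)
          exact le_antisymm ((min_le_left _ _).trans (le_of_eq h1)) (le_min hDh hD0)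
        · have h1 : (lexProd G H).edist (g, z) (g, d) = 1 :=
            SimpleGraph.edist_eq_one_iff_adj.mpr (Or.inr ⟨rfl, hzd⟩)
          exact le_antisymm ((min_le_right _ _).trans (le_of_eq h1)) (le_min hDh hD0)
      rw [hmin, d2, min_eq_right hD0]
  · rcases eq_or_ne g' c with rfl | hcg'
    · have hz : z ≠ h' := fun hzz => hh'S (by rw [hzz] at hwS; exact hwS)
      have d1 : (lexProd G H).edist (g', z) (g, h) = 1 :=
        SimpleGraph.edist_eq_one_iff_adj.mpr (Or.inl gadj.symm)
      have d0 : (lexProd G H).edist (g', z) (g, h₀) = 1 :=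
        SimpleGraph.edist_eq_one_iff_adj.mpr (Or.inl gadj.symm)
      have dh' : 1 ≤ (lexProd G H).edist (g', z) (g', h') :=
        Order.one_le_iff_pos.mpr (SimpleGraph.edist_pos_of_ne (by simp [hz]))
      rw [d1, d0, min_self, min_eq_left dh']
    · rw [lex_edist_eq G H hcg.symm, lex_edist_eq G H hcg.symm, lex_edist_eq G H hcg'.symm, min_self]
      exact (min_eq_left (edist_le_of_closedNbhd_subset G hsat.subset hcg'.symm)).symm
end

section
/- For any n ≥ 3, edim(P_n ⊙ K_1) = 2, where P_n is the path on n vertices and P_n ⊙ K_1 is the caterpillar obtained by attaching one pendant vertex to each vertex of P_n. -/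
open SimpleGraph

variable {V W : Type*}

abbrev CG (n : ℕ) : SimpleGraph (Fin n × Option (Fin 1)) := corona (pathGraph n) ⊥

def pen : Option (Fin 1) → ℕ | none => 0 | some _ => 1

def DD {n : ℕ} (u v : Fin n × Option (Fin 1)) : ℕ :=
  if u = v then 0 else Nat.dist u.1.val v.1.val + pen u.2 + pen v.2

lemma walk_lb {V : Type*} {G : SimpleGraph V} (f : V → ℕ)
    (hf : ∀ a b, G.Adj a b → f b ≤ f a + 1) {a v : V} (p : G.Walk a v) :
    f v ≤ f a + p.length := by
  induction p with
  | nil => simp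
  | @cons u b v h q ih =>
    have h1 := hf _ _ h
    rw [Walk.length_cons]
    omega

lemma le_edist_pot {V : Type*} {G : SimpleGraph V} (f : V → ℕ)
    (hf : ∀ a b, G.Adj a b → f b ≤ f a + 1) (u v : V) (hu : f u = 0) :
    (f v : ℕ∞) ≤ G.edist u v := by
  refine le_iInf fun p => ?_
  have := walk_lb f hf p
  rw [hu, Nat.zero_add] at this
  exact_mod_cast this

lemma base_walk {n : ℕ} (k : ℕ) (i j : Fin n) (h : j.val = i.val + k) :
    (CG n).edist (i, none) (j, none) ≤ k := by
  induction k generalizing i with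
  | zero => have : i = j := Fin.ext (by omega); simp [this]
  | succ m ih =>
    have hlt : i.val + 1 < n := by have := j.isLt; omega
    set i' : Fin n := ⟨i.val + 1, hlt⟩ with hi'
    have hadj : (CG n).Adj (i, none) (i', none) := by
      simp [corona, pathGraph_adj, hi']
    calc (CG n).edist (i, none) (j, none)
        ≤ (CG n).edist (i, none) (i', none) + (CG n).edist (i', none) (j, none) :=
          SimpleGraph.edist_triangle
      _ ≤ 1 + m := by
          gcongr
          · exact_mod_cast hadj.toWalk.edist_le
          · exact ih i' (by simp [hi']; omega)
      _ = (m + 1 : ℕ) := by push_cast; ring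

lemma base_dist_le {n : ℕ} (i j : Fin n) :
    (CG n).edist (i, none) (j, none) ≤ Nat.dist i.val j.val := by
  rcases le_total i.val j.val with h | h
  · exact base_walk _ i j (by simp [Nat.dist]; omega)
  · rw [SimpleGraph.edist_comm, Nat.dist_comm]
    exact base_walk _ j i (by simp [Nat.dist]; omega)

lemma pen_dist_le {n : ℕ} (i : Fin n) (x : Option (Fin 1)) :
    (CG n).edist (i, x) (i, none) ≤ pen x := by
  cases x with
  | none => simp [pen]
  | some y =>
    have hadj : (CG n).Adj (i, some y) (i, none) := by simp [corona]
    exact_mod_cast hadj.toWalk.edist_le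

lemma edist_le_D {n : ℕ} (u v : Fin n × Option (Fin 1)) :
    (CG n).edist u v ≤ DD u v := by
  by_cases h : u = v
  · simp [h, DD]
  · obtain ⟨i, x⟩ := u
    obtain ⟨j, y⟩ := v
    rw [DD, if_neg h]
    calc (CG n).edist (i, x) (j, y)
        ≤ (CG n).edist (i, x) (i, none) + (CG n).edist (i, none) (j, y) :=
          SimpleGraph.edist_triangle
      _ ≤ (CG n).edist (i, x) (i, none) +
            ((CG n).edist (i, none) (j, none) + (CG n).edist (j, none) (j, y)) := by
          gcongr; exact SimpleGraph.edist_triangle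
      _ ≤ (pen x : ℕ∞) + ((Nat.dist i.val j.val : ℕ∞) + (pen y : ℕ∞)) := by
          gcongr
          · exact pen_dist_le i x
          · exact base_dist_le i j
          · rw [SimpleGraph.edist_comm]; exact pen_dist_le j y
      _ = ((Nat.dist i.val j.val + pen x + pen y : ℕ) : ℕ∞) := by push_cast; ring

lemma D_lipschitz {n : ℕ} (u a b : Fin n × Option (Fin 1)) (h : (CG n).Adj a b) :
    DD u b ≤ DD u a + 1 := by
  obtain ⟨i, x⟩ := u
  obtain ⟨j, y⟩ := a
  obtain ⟨k, z⟩ := b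
  cases y with
  | none => cases z with
    | none =>
      simp only [corona, pathGraph_adj] at h
      simp only [DD, Prod.mk.injEq]
      split_ifs with h1 h2 <;>
        simp_all [pen, Nat.dist, Prod.ext_iff] <;> cases x <;> simp_all [pen] <;> omega
    | some z0 =>
      simp only [corona] at h
      subst h
      simp only [DD, Prod.mk.injEq]
      split_ifs with h1 h2 <;>
        simp_all [pen, Nat.dist, Prod.ext_iff] <;> cases x <;> simp_all [pen] <;> omega
  | some y0 => cases z with
    | none =>
      simp only [corona] at h
      subst h
      simp only [DD, Prod.mk.injEq]
      split_ifs with h1 h2 <;>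
        simp_all [pen, Nat.dist, Prod.ext_iff] <;> cases x <;> simp_all [pen] <;> omega
    | some z0 => simp [corona] at h

lemma edist_eq_D {n : ℕ} (u v : Fin n × Option (Fin 1)) :
    (CG n).edist u v = (DD u v : ℕ∞) := by
  refine le_antisymm (edist_le_D u v) ?_
  refine le_edist_pot (DD u) (fun a b hab => D_lipschitz u a b hab) u v ?_
  simp [DD]

lemma edgeDist_eq {n : ℕ} (w a b : Fin n × Option (Fin 1)) :
    edgeDist (CG n) w s(a, b) = ((min (DD w a) (DD w b) : ℕ) : ℕ∞) := by
  simp only [edgeDist, Sym2.lift_mk, edist_eq_D]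
  exact (Nat.mono_cast.map_min).symm

section SigLemmas
variable {n : ℕ} (hn : 3 ≤ n)

lemma Dw1_none (j : Fin n) : DD (⟨0, by omega⟩, some (0 : Fin 1)) (j, none) = j.val + 1 := by
  rw [DD, if_neg (by simp)]
  simp [pen, Nat.dist]

lemma Dw1_some (j : Fin n) (y : Fin 1) :
    DD (⟨0, by omega⟩, some (0 : Fin 1)) (j, some y) = if j.val = 0 then 0 else j.val + 2 := by
  have hy : y = 0 := Subsingleton.elim _ _
  subst hy
  by_cases hj : j.val = 0
  · rw [if_pos hj, DD, if_pos (by simp [Prod.ext_iff, Fin.ext_iff]; omega)]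
  · rw [if_neg hj, DD, if_neg (by simp [Prod.ext_iff, Fin.ext_iff]; try omega)]
    simp [pen, Nat.dist]
    all_goals omega

lemma Dw2_none (j : Fin n) : DD (⟨n-1, by omega⟩, some (0 : Fin 1)) (j, none) = n - j.val := by
  rw [DD, if_neg (by simp)]
  have := j.isLt
  simp [pen, Nat.dist]; omega

lemma Dw2_some (j : Fin n) (y : Fin 1) :
    DD (⟨n-1, by omega⟩, some (0 : Fin 1)) (j, some y)
      = if j.val = n - 1 then 0 else n - j.val + 1 := by
  have hy : y = 0 := Subsingleton.elim _ _
  subst hy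
  have := j.isLt
  by_cases hj : j.val = n - 1
  · rw [if_pos hj, DD, if_pos (by simp [Prod.ext_iff, Fin.ext_iff]; omega)]
  · rw [if_neg hj, DD, if_neg (by simp [Prod.ext_iff, Fin.ext_iff]; try omega)]
    simp [pen, Nat.dist]; omega

end SigLemmas

lemma gen2 {n : ℕ} (hn : 3 ≤ n) :
    IsEdgeMetricGenerator (CG n)
      {((⟨0, by omega⟩ : Fin n), some (0:Fin 1)), ((⟨n-1, by omega⟩ : Fin n), some (0:Fin 1))} := by
  intro e₁
  induction e₁ using Sym2.ind with | _ a₁ b₁ =>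
  intro he₁ e₂
  induction e₂ using Sym2.ind with | _ a₂ b₂ =>
  intro he₂ hne
  rw [mem_edgeSet] at he₁ he₂
  by_contra hc
  push_neg at hc
  have h1 := hc _ (Set.mem_insert _ _)
  have h2 := hc _ (Set.mem_insert_of_mem _ rfl)
  clear hc
  obtain ⟨j₁, y₁⟩ := a₁; obtain ⟨k₁, z₁⟩ := b₁
  obtain ⟨j₂, y₂⟩ := a₂; obtain ⟨k₂, z₂⟩ := b₂
  have hj₁ := j₁.isLt; have hk₁ := k₁.isLt
  have hj₂ := j₂.isLt; have hk₂ := k₂.isLt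
  rcases y₁ with _ | y₁ <;> rcases z₁ with _ | z₁ <;>
    rcases y₂ with _ | y₂ <;> rcases z₂ with _ | z₂ <;>
    simp only [corona, pathGraph_adj] at he₁ he₂ <;>
    [skip; skip; skip; skip; skip; skip; skip; skip; skip; skip; skip; skip;
     skip; skip; skip; skip] <;>
    first
      | exact he₁.2
      | exact he₂.2
      | (try subst he₁
         try subst he₂
         try (have : y₁ = 0 := Subsingleton.elim _ _; subst this)
         try (have : z₁ = 0 := Subsingleton.elim _ _; subst this)
         try (have : y₂ = 0 := Subsingleton.elim _ _; subst this)
         try (have : z₂ = 0 := Subsingleton.elim _ _; subst this)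
         simp only [edgeDist_eq, Dw1_none hn, Dw1_some hn, Dw2_none hn, Dw2_some hn,
           Nat.cast_inj] at h1 h2
         try split_ifs at h1 h2
         all_goals
           first
             | omega
             | (apply hne
                rw [Sym2.eq_iff]
                simp only [Prod.mk.injEq, Fin.ext_iff, Option.some.injEq, and_true, true_and,
                  reduceCtorEq, and_false, false_and, or_false, false_or]
                omega))

lemma exists_pair {n : ℕ} (hn : 3 ≤ n) (w : Fin n × Option (Fin 1)) :
    ∃ e₁ ∈ (CG n).edgeSet, ∃ e₂ ∈ (CG n).edgeSet, e₁ ≠ e₂ ∧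
      edgeDist (CG n) w e₁ = edgeDist (CG n) w e₂ := by
  obtain ⟨j, x⟩ := w
  have hj := j.isLt
  rcases x with _ | y
  · -- w = (j, none): pendant at j vs a path edge at j
    by_cases hlt : j.val + 1 < n
    · refine ⟨s((j, none), (j, some 0)), ?_, s((j, none), (⟨j.val+1, hlt⟩, none)), ?_, ?_, ?_⟩
      · simp [corona]
      · simp [corona, pathGraph_adj]
      · simp [Sym2.eq_iff, Prod.ext_iff, Fin.ext_iff]
        all_goals omega
      · rw [edgeDist_eq, edgeDist_eq, Nat.cast_inj]
        simp only [DD, Prod.mk.injEq, Fin.ext_iff, pen, Nat.dist, and_true, and_false,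
          true_and, false_and, Option.some.injEq, reduceCtorEq, if_false]
        (try split_ifs) <;> omega
    · have hj1 : 1 ≤ j.val := by omega
      refine ⟨s((j, none), (j, some 0)), ?_, s((j, none), (⟨j.val-1, by omega⟩, none)), ?_, ?_, ?_⟩
      · simp [corona]
      · simp [corona, pathGraph_adj]; omega
      · simp [Sym2.eq_iff, Prod.ext_iff, Fin.ext_iff]
        all_goals omega
      · rw [edgeDist_eq, edgeDist_eq, Nat.cast_inj]
        simp only [DD, Prod.mk.injEq, Fin.ext_iff, pen, Nat.dist, and_true, and_false,
          true_and, false_and, Option.some.injEq, reduceCtorEq, if_false]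
        (try split_ifs) <;> omega
  · -- w = (j, some y)
    by_cases h0 : j.val = 0
    · refine ⟨s((⟨1, by omega⟩, none), (⟨2, by omega⟩, none)), ?_,
        s((⟨1, by omega⟩, none), (⟨1, by omega⟩, some 0)), ?_, ?_, ?_⟩
      · simp [corona, pathGraph_adj]
      · simp [corona]
      · simp [Sym2.eq_iff, Prod.ext_iff, Fin.ext_iff]
      · rw [edgeDist_eq, edgeDist_eq, Nat.cast_inj]
        simp only [DD, Prod.mk.injEq, Fin.ext_iff, pen, Nat.dist, and_true, and_false,
          true_and, false_and, Option.some.injEq, reduceCtorEq, if_false]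
        (try split_ifs) <;> omega
    · by_cases hl : j.val = n - 1
      · refine ⟨s((⟨n-3, by omega⟩, none), (⟨n-2, by omega⟩, none)), ?_,
          s((⟨n-2, by omega⟩, none), (⟨n-2, by omega⟩, some 0)), ?_, ?_, ?_⟩
        · simp [corona, pathGraph_adj]; omega
        · simp [corona]
        · simp [Sym2.eq_iff, Prod.ext_iff, Fin.ext_iff]
          all_goals omega
        · rw [edgeDist_eq, edgeDist_eq, Nat.cast_inj]
          simp only [DD, Prod.mk.injEq, Fin.ext_iff, pen, Nat.dist, and_true, and_false,
            true_and, false_and, Option.some.injEq, reduceCtorEq, if_false]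
          (try split_ifs) <;> omega
      · refine ⟨s((⟨j.val-1, by omega⟩, none), (j, none)), ?_,
          s((j, none), (⟨j.val+1, by omega⟩, none)), ?_, ?_, ?_⟩
        · simp [corona, pathGraph_adj]; omega
        · simp [corona, pathGraph_adj]
        · simp [Sym2.eq_iff, Prod.ext_iff, Fin.ext_iff]
          all_goals omega
        · rw [edgeDist_eq, edgeDist_eq, Nat.cast_inj]
          simp only [DD, Prod.mk.injEq, Fin.ext_iff, pen, Nat.dist, and_true, and_false,
            true_and, false_and, Option.some.injEq, reduceCtorEq, if_false]
          (try split_ifs) <;> omega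

theorem edim_corona_path_K1 (n : ℕ) (hn : 3 ≤ n) :
    edim (corona (pathGraph n) (⊥ : SimpleGraph (Fin 1))) = 2 := by
  have hT2 : (2 : ℕ) ∈ {m | ∃ S : Set (Fin n × Option (Fin 1)), S.ncard = m ∧
      IsEdgeMetricGenerator (CG n) S} := by
    refine ⟨{((⟨0, by omega⟩ : Fin n), some (0:Fin 1)),
      ((⟨n-1, by omega⟩ : Fin n), some (0:Fin 1))}, ?_, gen2 hn⟩
    rw [Set.ncard_pair]
    simp only [ne_eq, Prod.mk.injEq, Fin.ext_iff]
    omega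
  have hlb : ∀ m ∈ {m | ∃ S : Set (Fin n × Option (Fin 1)), S.ncard = m ∧
      IsEdgeMetricGenerator (CG n) S}, 2 ≤ m := by
    rintro m ⟨S, hc, hg⟩
    by_contra hm
    interval_cases m
    · rw [Set.ncard_eq_zero S.toFinite] at hc
      subst hc
      obtain ⟨e₁, he₁, e₂, he₂, hne, _⟩ := exists_pair hn ((⟨0, by omega⟩ : Fin n), none)
      obtain ⟨w, hw, -⟩ := hg e₁ he₁ e₂ he₂ hne
      exact hw
    · rw [Set.ncard_eq_one] at hc
      obtain ⟨w, rfl⟩ := hc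
      obtain ⟨e₁, he₁, e₂, he₂, hne, heq⟩ := exists_pair hn w
      obtain ⟨w', hw', hne'⟩ := hg e₁ he₁ e₂ he₂ hne
      rw [Set.mem_singleton_iff] at hw'
      subst hw'
      exact hne' heq
  exact le_antisymm (Nat.sInf_le hT2) (le_csInf ⟨2, hT2⟩ hlb)
end
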